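/- For every m ≥ 3: 28·((B^(m−3)).mulVec ![0,0,0,1]) 2 = 2^m + v(m), where v(m) = −8, −16, 24 according as m ≡ 0, 1, 2 (mod 3); and 28·((B^(m−3)).mulVec ![0,1,0,0]) 2 = 2^m + v'(m), where v'(m) = −8, 12, −4 according as m ≡ 0, 1, 2 (mod 3). -/
import Mathlib


def B : Matrix (Fin 4) (Fin 4) ℤ :=
  !![0, 0, 0, 1; 0, 1, 1, 0; 2, 1, 0, 0; 0, 0, 1, 1]

private def Cv : Fin 4 → ℤ := ![4, 8, 8, 8]

private def Pv : ℕ → Fin 4 → ℤ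
  | 0 => ![-4, -8, -8, 20]
  | 1 => ![20, -16, -16, 12]
  | _ => ![12, -32, 24, -4]

private def Qv : ℕ → Fin 4 → ℤ
  | 0 => ![-4, 20, -8, -8]
  | 1 => ![-8, 12, 12, -16]
  | _ => ![-16, 24, -4, -4]

private lemma step (n : ℕ) (P : ℕ → Fin 4 → ℤ)
    (h : ∀ k < 3, B.mulVec (P k) = P ((k + 1) % 3))
    (ih : (28 : ℤ) • ((B ^ n).mulVec (P 3)) = (2 ^ n : ℤ) • Cv + P (n % 3)) :
    (28 : ℤ) • ((B ^ (n + 1)).mulVec (P 3)) = (2 ^ (n + 1) : ℤ) • Cv + P ((n + 1) % 3) := by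
  have : (B ^ (n + 1)).mulVec (P 3) = B.mulVec ((B ^ n).mulVec (P 3)) := by
    rw [pow_succ']
    rw [← Matrix.mulVec_mulVec]
  rw [this]
  have h2 : B.mulVec ((28 : ℤ) • ((B ^ n).mulVec (P 3))) = (28 : ℤ) • B.mulVec ((B ^ n).mulVec (P 3)) :=
    B.mulVec_smul 28 _
  have := congrArg B.mulVec ih
  rw [h2] at this
  rw [this]
  have hBC : B.mulVec Cv = (2 : ℤ) • Cv := by
    funext i
    fin_cases i <;> simp [B, Cv, Matrix.mulVec, dotProduct, Fin.sum_univ_four]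
  have hlin : B.mulVec ((2 ^ n : ℤ) • Cv + P (n % 3))
      = (2 ^ n : ℤ) • B.mulVec Cv + B.mulVec (P (n % 3)) := by
    rw [Matrix.mulVec_add, Matrix.mulVec_smul]
  rw [hlin, hBC, h (n % 3) (Nat.mod_lt _ (by norm_num)), smul_smul]
  have : (n % 3 + 1) % 3 = (n + 1) % 3 := by omega
  rw [this]
  ring_nf

private lemma key (P : ℕ → Fin 4 → ℤ)
    (hbase : (28 : ℤ) • (P 3) = Cv + P 0)
    (h : ∀ k < 3, B.mulVec (P k) = P ((k + 1) % 3)) :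
    ∀ n, (28 : ℤ) • ((B ^ n).mulVec (P 3)) = (2 ^ n : ℤ) • Cv + P (n % 3) := by
  intro n
  induction n with
  | zero => simpa using hbase
  | succ n ih => exact step n P h ih

private lemma hP : ∀ k < 3, B.mulVec (Pv k) = Pv ((k + 1) % 3) := by
  intro k hk
  interval_cases k <;>
    · funext i
      fin_cases i <;> simp [B, Pv, Matrix.mulVec, dotProduct, Fin.sum_univ_four]

private lemma hQ : ∀ k < 3, B.mulVec (Qv k) = Qv ((k + 1) % 3) := by
  intro k hk
  interval_cases k <;>
    · funext i
      fin_cases i <;> simp [B, Qv, Matrix.mulVec, dotProduct, Fin.sum_univ_four]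

private def Pv' : ℕ → Fin 4 → ℤ
  | 3 => ![0, 0, 0, 1]
  | k => Pv k

private def Qv' : ℕ → Fin 4 → ℤ
  | 3 => ![0, 1, 0, 0]
  | k => Qv k

theorem count_b_m (m : ℕ) (hm : 3 ≤ m) :
    (28 * ((B ^ (m - 3)).mulVec ![0, 0, 0, 1]) 2 =
        2 ^ m + (if m % 3 = 0 then -8 else if m % 3 = 1 then -16 else 24)) ∧
    (28 * ((B ^ (m - 3)).mulVec ![0, 1, 0, 0]) 2 =
        2 ^ m + (if m % 3 = 0 then -8 else if m % 3 = 1 then 12 else -4)) := by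
  have hP' : ∀ k < 3, B.mulVec (Pv' k) = Pv' ((k + 1) % 3) := by
    intro k hk
    interval_cases k <;> simpa [Pv'] using hP _ (by norm_num)
  have hQ' : ∀ k < 3, B.mulVec (Qv' k) = Qv' ((k + 1) % 3) := by
    intro k hk
    interval_cases k <;> simpa [Qv'] using hQ _ (by norm_num)
  obtain ⟨n, rfl⟩ : ∃ n, m = n + 3 := ⟨m - 3, by omega⟩
  have kP := key Pv' (by
    funext i; fin_cases i <;> simp [Pv', Pv, Cv]) hP' (n)
  have kQ := key Qv' (by
    funext i; fin_cases i <;> simp [Qv', Qv, Cv]) hQ' (n)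
  have hPm : Pv' 3 = ![0,0,0,1] := rfl
  have hQm : Qv' 3 = ![0,1,0,0] := rfl
  rw [hPm] at kP; rw [hQm] at kQ
  have eP := congrFun kP 2
  have eQ := congrFun kQ 2
  have hns : n + 3 - 3 = n := by omega
  rw [hns]
  have hmod : n % 3 = (n + 3) % 3 := by omega
  have hpow : (2 : ℤ) ^ n * 8 = 2 ^ (n + 3) := by rw [pow_add]; ring
  simp only [Pi.smul_apply, Pi.add_apply, smul_eq_mul] at eP eQ
  constructor
  · rw [eP, ← hmod]
    have h3 : n % 3 < 3 := Nat.mod_lt _ (by norm_num)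
    interval_cases h : n % 3 <;> simp [Pv', Pv, Cv, ← hpow] <;> ring
  · rw [eQ, ← hmod]
    have h3 : n % 3 < 3 := Nat.mod_lt _ (by norm_num)
    interval_cases h : n % 3 <;> simp [Qv', Qv, Cv, ← hpow] <;> ring
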